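/- The characteristic polynomial χ_n(t) = det(t·I − P(n)) of the symmetric Pascal matrix satisfies the functional equation χ_n(t) = (−t)^n · χ_n(1/t) (as an identity of rational functions, equivalently the coefficient sequence satisfies a_k = (−1)^n a_{n−k} up to sign conventions). -/

import Mathlib

open Finset Polynomial Matrix

lemma pascal_vandermonde {n i j : ℕ} (hj : j < n) :
    ∑ k ∈ range n, i.choose k * j.choose k = (i + j).choose i := by
  rw [← Finset.sum_subset (Finset.range_subset_range.mpr hj)
      (fun k _ hk => by
        have : j < k := by simpa using hk
        simp [Nat.choose_eq_zero_of_lt this])]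
  rw [show (i+j).choose i = (i+j).choose j from Nat.choose_symm_add]
  rw [Nat.add_choose_eq i j j, Finset.Nat.sum_antidiagonal_eq_sum_range_succ_mk]
  apply Finset.sum_congr rfl
  intro k hk
  have hk' : k ≤ j := by simpa [Nat.lt_succ_iff] using hk
  rw [Nat.choose_symm hk']

lemma pascal_alt {n i j : ℕ} (hi : i < n) :
    ∑ k ∈ range n, (-1:ℤ)^(k+j) * (i.choose k) * (k.choose j) = if i = j then 1 else 0 := by
  rcases lt_or_ge i j with h | h
  · rw [if_neg h.ne]
    apply Finset.sum_eq_zero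
    intro k _
    rcases le_or_gt k i with hk | hk
    · have : k < j := lt_of_le_of_lt hk h
      simp [Nat.choose_eq_zero_of_lt this]
    · simp [Nat.choose_eq_zero_of_lt hk]
  · rw [← Finset.sum_subset (Finset.range_subset_range.mpr hi)
        (fun k _ hk => by
          have : i < k := by simpa using hk
          simp [Nat.choose_eq_zero_of_lt this])]
    rw [← Finset.sum_subset (show Finset.Ico j (i+1) ⊆ range (i+1) by
          rw [Finset.range_eq_Ico]; exact Finset.Ico_subset_Ico (Nat.zero_le _) le_rfl)
        (fun k hk hk' => by
          simp only [Finset.mem_range] at hk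
          simp only [Finset.mem_Ico, not_and, not_le] at hk'
          have : k < j := by omega
          simp [Nat.choose_eq_zero_of_lt this])]
    rw [Finset.sum_Ico_eq_sum_range]
    have hij : i + 1 - j = (i - j) + 1 := by omega
    rw [hij]
    have key : ∀ l ∈ range ((i-j)+1),
        (-1:ℤ)^(j + l + j) * (i.choose (j+l)) * ((j+l).choose j)
          = (i.choose j) * ((-1:ℤ)^l * ((i-j).choose l)) := by
      intro l hl
      have hl' : l ≤ i - j := by simpa [Nat.lt_succ_iff] using hl
      have h1 : j + l ≤ i := by omega
      have h2 : j ≤ j + l := Nat.le_add_right _ _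
      have := Nat.choose_mul (n := i) h2
      simp only [Nat.add_sub_cancel_left] at this
      have hcast : ((i.choose (j+l)) * ((j+l).choose j) : ℤ) = (i.choose j) * ((i-j).choose l) := by
        exact_mod_cast congrArg (Nat.cast : ℕ → ℤ) this
      have hsign : (-1:ℤ)^(j + l + j) = (-1)^l := by
        rw [show j + l + j = l + 2*j by ring, pow_add, pow_mul]
        simp
      rw [mul_assoc, hcast, hsign]; ring
    rw [Finset.sum_congr rfl key, ← Finset.mul_sum, Int.alternating_sum_range_choose]
    by_cases hij0 : i = j
    · simp [hij0]
    · rw [if_neg (by omega), if_neg hij0, mul_zero]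

section PascalMatrix

variable (n : ℕ)

private def Lmat : Matrix (Fin n) (Fin n) ℚ := Matrix.of fun i j => ((i:ℕ).choose j : ℚ)
private def Dmat : Matrix (Fin n) (Fin n) ℚ := Matrix.diagonal fun i => (-1:ℚ)^(i:ℕ)
private def Smat : Matrix (Fin n) (Fin n) ℚ := Matrix.of fun i j => ((Nat.choose (i + j) i : ℚ))

private lemma L_mul_Lt : Lmat n * (Lmat n)ᵀ = Smat n := by
  ext i j
  rw [Matrix.mul_apply]
  show (∑ k : Fin n, ((i:ℕ).choose k : ℚ) * ((j:ℕ).choose k : ℚ)) = (((i:ℕ) + (j:ℕ)).choose i : ℚ)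
  rw [← pascal_vandermonde (i := (i:ℕ)) j.isLt]
  rw [Fin.sum_univ_eq_sum_range (fun k => ((i:ℕ).choose k : ℚ) * ((j:ℕ).choose k : ℚ))]
  push_cast
  rfl

private lemma L_mul_DLD : Lmat n * (Dmat n * Lmat n * Dmat n) = 1 := by
  ext i j
  rw [Matrix.mul_apply]
  have hentry : ∀ k : Fin n, Lmat n i k * (Dmat n * Lmat n * Dmat n) k j
      = ((-1:ℤ)^((k:ℕ)+(j:ℕ)) * ((i:ℕ).choose k) * ((k:ℕ).choose j) : ℤ) := by
    intro k
    simp only [Lmat, Dmat, Matrix.mul_diagonal, Matrix.diagonal_mul, Matrix.of_apply]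
    push_cast
    ring
  rw [Finset.sum_congr rfl (fun k _ => hentry k)]
  rw [Fin.sum_univ_eq_sum_range (fun k => (((-1:ℤ)^(k+(j:ℕ)) * ((i:ℕ).choose k) * (k.choose j) : ℤ) : ℚ))]
  rw [← Int.cast_sum, pascal_alt i.isLt]
  by_cases h : i = j
  · simp [h, Matrix.one_apply]
  · have : (i:ℕ) ≠ (j:ℕ) := fun hc => h (Fin.ext hc)
    simp [Matrix.one_apply, h, this]

private lemma det_L : (Lmat n).det = 1 := by
  rw [Matrix.det_of_lowerTriangular (Lmat n)
      (fun i j (hij : (OrderDual.toDual j) < OrderDual.toDual i) => by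
        have : (i:ℕ) < (j:ℕ) := hij
        simp [Lmat, Nat.choose_eq_zero_of_lt this])]
  simp [Lmat]

end PascalMatrix

private lemma det_key {m R : Type*} [Fintype m] [DecidableEq m] [CommRing R]
    (x : R) (A Dm S : Matrix m m R)
    (hS : A * Aᵀ = S) (hb : A * (Dm * A * Dm) = 1) (hD : Dm * Dm = 1)
    (hDt : Dmᵀ = Dm) (hdet : A.det = 1) :
    (x • S - 1).det = (x • 1 - S).det := by
  have hb' : Dm * A * Dm * A = 1 := mul_eq_one_comm.mp hb
  have hbt0 : Aᵀ * (Dm * (Aᵀ * Dm)) = 1 := by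
    have := congrArg Matrix.transpose hb'
    simpa [Matrix.transpose_mul, hDt, Matrix.mul_assoc] using this
  have hbt : Dm * (Aᵀ * (Dm * Aᵀ)) = 1 := by
    have := mul_eq_one_comm.mp hbt0
    simpa [Matrix.mul_assoc] using this
  have hATD : Aᵀ * (Dm * Aᵀ) = Dm := by
    calc Aᵀ * (Dm * Aᵀ) = (Dm * Dm) * (Aᵀ * (Dm * Aᵀ)) := by rw [hD, one_mul]
    _ = Dm * (Dm * (Aᵀ * (Dm * Aᵀ))) := by rw [mul_assoc]
    _ = Dm := by rw [hbt, mul_one]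
  have hkey1 : (Dm * S * Dm) * (Aᵀ * A) = 1 := by
    calc (Dm * S * Dm) * (Aᵀ * A) = Dm * (A * (Aᵀ * (Dm * (Aᵀ * A)))) := by
          rw [← hS]; simp only [Matrix.mul_assoc]
    _ = Dm * (A * ((Aᵀ * (Dm * Aᵀ)) * A)) := by simp only [Matrix.mul_assoc]
    _ = Dm * (A * (Dm * A)) := by rw [hATD]
    _ = 1 := by simpa [Matrix.mul_assoc] using hb'
  have M2 : (x • S - 1) * A = A * (x • (Aᵀ * A) - 1) := by
    rw [sub_mul, mul_sub, Matrix.smul_mul, Matrix.mul_smul, one_mul, mul_one, ← hS, mul_assoc]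
  have M3 : (x • (1 : Matrix m m R) - Dm * S * Dm) * (Aᵀ * A) = x • (Aᵀ * A) - 1 := by
    rw [sub_mul, Matrix.smul_mul, one_mul, hkey1]
  have M4 : Dm * (x • (1 : Matrix m m R) - S) * Dm = x • 1 - Dm * S * Dm := by
    rw [mul_sub, sub_mul, Matrix.mul_smul, mul_one, Matrix.smul_mul, hD, mul_assoc]
  have hDd : Dm.det * Dm.det = 1 := by rw [← Matrix.det_mul, hD, Matrix.det_one]
  have d2 : (x • S - 1).det = (x • (Aᵀ * A) - 1).det := by
    have := congrArg Matrix.det M2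
    rwa [Matrix.det_mul, Matrix.det_mul, hdet, mul_one, one_mul] at this
  have d3 : (x • (Aᵀ * A) - 1).det = (x • (1 : Matrix m m R) - Dm * S * Dm).det := by
    have := congrArg Matrix.det M3
    rw [Matrix.det_mul, Matrix.det_mul, Matrix.det_transpose, hdet, mul_one, mul_one] at this
    exact this.symm
  have d4 : (x • (1 : Matrix m m R) - Dm * S * Dm).det = (x • 1 - S).det := by
    have := congrArg Matrix.det M4
    rw [Matrix.det_mul, Matrix.det_mul] at this
    calc (x • (1 : Matrix m m R) - Dm * S * Dm).det
        = Dm.det * (x • 1 - S).det * Dm.det := this.symm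
      _ = (x • 1 - S).det * (Dm.det * Dm.det) := by ring
      _ = (x • 1 - S).det := by rw [hDd, mul_one]
  rw [d2, d3, d4]

private lemma charpoly_eq (n : ℕ) :
    (Smat n).charpoly = (-1 : ℚ[X]) ^ n * (Smat n).charpolyRev := by
  classical
  set A : Matrix (Fin n) (Fin n) ℚ[X] := (Lmat n).map C with hA
  set Dm : Matrix (Fin n) (Fin n) ℚ[X] := (Dmat n).map C with hDm
  set S' : Matrix (Fin n) (Fin n) ℚ[X] := (Smat n).map C with hS'
  have hmapmul : ∀ M N : Matrix (Fin n) (Fin n) ℚ, (M * N).map C = M.map C * N.map C :=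
    fun M N => Matrix.map_mul
  have hmapone : ((1 : Matrix (Fin n) (Fin n) ℚ)).map C = 1 :=
    Matrix.map_one _ (map_zero C) (map_one C)
  have hSfac : A * Aᵀ = S' := by
    rw [hA, hS', ← Matrix.transpose_map, ← hmapmul, L_mul_Lt]
  have hb : A * (Dm * A * Dm) = 1 := by
    rw [hA, hDm, ← hmapmul, ← hmapmul, ← hmapmul, L_mul_DLD, hmapone]
  have hDD : Dmat n * Dmat n = 1 := by
    rw [Dmat, Matrix.diagonal_mul_diagonal]
    convert Matrix.diagonal_one with i
    rw [← mul_pow, neg_mul_neg, one_mul, one_pow]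
  have hD : Dm * Dm = 1 := by rw [hDm, ← hmapmul, hDD, hmapone]
  have hDt : Dmᵀ = Dm := by rw [hDm, ← Matrix.transpose_map, Dmat, Matrix.diagonal_transpose]
  have hdet : A.det = 1 := by
    rw [hA, ← RingHom.mapMatrix_apply, ← RingHom.map_det, det_L, Polynomial.C_1]
  have hkey := det_key (X : ℚ[X]) A Dm S' hSfac hb hD hDt hdet
  have hcm : charmatrix (Smat n) = (X : ℚ[X]) • 1 - S' := by
    ext i j
    rcases eq_or_ne i j with h | h
    · simp [h, charmatrix_apply_eq, Matrix.one_apply, hS']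
    · simp [charmatrix_apply_ne _ _ _ h, Matrix.one_apply, h, hS']
  have hneg : (-1 : ℚ[X]) • ((1 : Matrix (Fin n) (Fin n) ℚ[X]) - (X : ℚ[X]) • S')
      = (X : ℚ[X]) • S' - 1 := by
    rw [neg_one_smul, neg_sub]
  calc (Smat n).charpoly = ((X : ℚ[X]) • 1 - S').det := by
        rw [Matrix.charpoly, hcm]
    _ = ((X : ℚ[X]) • S' - 1).det := hkey.symm
    _ = ((-1 : ℚ[X]) • ((1 : Matrix (Fin n) (Fin n) ℚ[X]) - (X : ℚ[X]) • S')).det := by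
        rw [hneg]
    _ = (-1 : ℚ[X]) ^ n * (Smat n).charpolyRev := by
        rw [Matrix.det_smul, Matrix.charpolyRev]
        simp [hS']

theorem symm_pascal_charpoly_selfReciprocal (n : ℕ) (k : ℕ) (hk : k ≤ n) :
    (Matrix.of fun i j : Fin n => ((Nat.choose (i + j) i : ℚ))).charpoly.coeff k =
      (-1 : ℚ) ^ n *
        (Matrix.of fun i j : Fin n => ((Nat.choose (i + j) i : ℚ))).charpoly.coeff (n - k) := by
  have hM : (Matrix.of fun i j : Fin n => ((Nat.choose (i + j) i : ℚ))) = Smat n := rfl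
  rw [hM]
  set p := (Smat n).charpoly with hp
  have hdeg : p.natDegree = n := by
    rw [hp, Matrix.charpoly_natDegree_eq_dim, Fintype.card_fin]
  have hrev : p.reverse = (Smat n).charpolyRev := Matrix.reverse_charpoly _
  have hcoeff : (Smat n).charpolyRev.coeff k = p.coeff (n - k) := by
    rw [← hrev, Polynomial.reverse, hdeg, Polynomial.coeff_reflect, Polynomial.revAt_le hk]
  have hmain := charpoly_eq n
  have h1 : ((-1 : ℚ[X]) ^ n) = Polynomial.C ((-1 : ℚ) ^ n) := by
    rw [map_pow, map_neg, Polynomial.C_1]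
  calc p.coeff k = ((-1 : ℚ[X]) ^ n * (Smat n).charpolyRev).coeff k := by rw [← hmain]
    _ = (-1 : ℚ) ^ n * (Smat n).charpolyRev.coeff k := by
        rw [h1, Polynomial.coeff_C_mul]
    _ = (-1 : ℚ) ^ n * p.coeff (n - k) := by rw [hcoeff]
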